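/- The degree-ten polynomial f(β) = 310 β¹⁰ − 3234 β⁹ + 17112 β⁸ − 49101 β⁷ + 76180 β⁶ − 58398 β⁵ + 10056 β⁴ + 15040 β³ − 9680 β² + 1716 β − 4 has exactly one real root greater than one; that is, there exists a unique real number β_crit with β_crit > 1 and f(β_crit) = 0. -/

import Mathlib

private lemma stmt17_neg (x : ℝ) (h1 : 1 < x) (h2 : x ≤ 8/5) :
    310 * x ^ 10 - 3234 * x ^ 9 + 17112 * x ^ 8 - 49101 * x ^ 7 + 76180 * x ^ 6
      - 58398 * x ^ 5 + 10056 * x ^ 4 + 15040 * x ^ 3 - 9680 * x ^ 2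
      + 1716 * x - 4 < 0 := by
  have ha : (0:ℝ) ≤ x - 1 := by linarith
  have hb : (0:ℝ) ≤ 8/5 - x := by linarith
  nlinarith [mul_nonneg ha hb, sq_nonneg ((x-1)*(8/5-x)), mul_nonneg (mul_nonneg ha ha) hb,
    mul_nonneg (mul_nonneg hb hb) ha, mul_nonneg (mul_nonneg (mul_nonneg ha ha) ha) hb,
    mul_nonneg (mul_nonneg (mul_nonneg hb hb) hb) ha, sq_nonneg ((x-1)^2*(8/5-x)),
    sq_nonneg ((x-1)*(8/5-x)^2), pow_nonneg ha 4, pow_nonneg hb 4, pow_nonneg ha 5,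
    sq_nonneg (x-1), sq_nonneg (8/5-x)]

private lemma stmt17_deriv_pos (x : ℝ) (hx : 8/5 ≤ x) :
    0 < 3100*x^9 - 29106*x^8 + 136896*x^7 - 343707*x^6 + 457080*x^5
      - 291990*x^4 + 40224*x^3 + 45120*x^2 - 19360*x + 1716 := by
  have ht : (0:ℝ) ≤ x - 8/5 := by linarith
  nlinarith [pow_nonneg ht 2, pow_nonneg ht 3, pow_nonneg ht 4, pow_nonneg ht 5,
    pow_nonneg ht 6, pow_nonneg ht 7, pow_nonneg ht 8, pow_nonneg ht 9, ht]

theorem stmt_17 :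
    ∃! β : ℝ, β > 1 ∧
      310 * β ^ 10 - 3234 * β ^ 9 + 17112 * β ^ 8 - 49101 * β ^ 7 + 76180 * β ^ 6
        - 58398 * β ^ 5 + 10056 * β ^ 4 + 15040 * β ^ 3 - 9680 * β ^ 2
        + 1716 * β - 4 = 0 := by
  set F : ℝ → ℝ := fun β =>
    310 * β ^ 10 - 3234 * β ^ 9 + 17112 * β ^ 8 - 49101 * β ^ 7 + 76180 * β ^ 6
      - 58398 * β ^ 5 + 10056 * β ^ 4 + 15040 * β ^ 3 - 9680 * β ^ 2
      + 1716 * β - 4 with hF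
  have hcont : Continuous F := by fun_prop
  have hder : ∀ x : ℝ, HasDerivAt F
      (3100*x^9 - 29106*x^8 + 136896*x^7 - 343707*x^6 + 457080*x^5
        - 291990*x^4 + 40224*x^3 + 45120*x^2 - 19360*x + 1716) x := by
    intro x
    have hpow : ∀ (n : ℕ) (c : ℝ), HasDerivAt (fun β : ℝ => c * β ^ n)
        (c * (n * x ^ (n - 1))) x := fun n c => (hasDerivAt_pow n x).const_mul c
    have hlin : HasDerivAt (fun β : ℝ => 1716 * β) (1716 * 1) x :=
      (hasDerivAt_id x).const_mul 1716
    have H1 := (hpow 10 310).sub (hpow 9 3234)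
    have H2 := H1.add (hpow 8 17112)
    have H3 := H2.sub (hpow 7 49101)
    have H4 := H3.add (hpow 6 76180)
    have H5 := H4.sub (hpow 5 58398)
    have H6 := H5.add (hpow 4 10056)
    have H7 := H6.add (hpow 3 15040)
    have H8 := H7.sub (hpow 2 9680)
    have H9 := H8.add hlin
    have H10 := H9.sub_const 4
    refine HasDerivAt.congr_deriv H10 ?_
    push_cast
    ring
  -- strict monotonicity on [8/5, ∞)
  have hmono : StrictMonoOn F (Set.Ici (8/5 : ℝ)) := by
    apply strictMonoOn_of_deriv_pos (convex_Ici _) hcont.continuousOn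
    intro x hx
    rw [interior_Ici] at hx
    rw [(hder x).deriv]
    exact stmt17_deriv_pos x (le_of_lt hx)
  -- existence via IVT
  have hIVT : (0:ℝ) ∈ F '' Set.Ioo (8/5 : ℝ) 2 := by
    apply intermediate_value_Ioo (by norm_num : (8/5:ℝ) ≤ 2) hcont.continuousOn
    constructor
    · show F (8/5) < 0
      simp only [hF]
      norm_num
    · show (0:ℝ) < F 2
      simp only [hF]
      norm_num
  obtain ⟨c, hc, hFc⟩ := hIVT
  refine ⟨c, ⟨by linarith [hc.1], hFc⟩, ?_⟩
  rintro y ⟨hy1, hy0⟩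
  have hy85 : (8/5 : ℝ) < y := by
    by_contra h
    push_neg at h
    have h2 := stmt17_neg y hy1 h
    rw [hy0] at h2
    exact lt_irrefl 0 h2
  exact hmono.injOn (Set.mem_Ici.2 (le_of_lt hy85)) (Set.mem_Ici.2 (le_of_lt hc.1))
    (show F y = F c from hy0.trans hFc.symm)
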